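/- Let α, β be nonzero power sums in E with ℓ(α) ≥ ℓ(β), and suppose that ℓ(β) does not divide ℓ(α) (as positive integers). Then for every ζ ∈ E one has ℓ(α − ζ·β) ≥ ℓ(β). -/

import Mathlib

open scoped BigOperators

/-- `α` belongs to `E_ℚ`: it is a power sum `n ↦ ∑ cᵢ aᵢⁿ` with nonzero rational
coefficients `cᵢ` and distinct positive *rational* roots `aᵢ` (the zero function,
given by the empty sum, is allowed). -/
def IsPowerSumQ (α : ℕ → ℚ) : Prop :=
  ∃ (s : Finset ℚ) (c : ℚ → ℚ),
    (∀ a ∈ s, c a ≠ 0) ∧ (∀ a ∈ s, 0 < a) ∧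
    ∀ n : ℕ, α n = ∑ a ∈ s, c a * a ^ n

/-- `α` belongs to `E`: it is a power sum `n ↦ ∑ cᵢ aᵢⁿ` with nonzero rational
coefficients `cᵢ` and distinct positive *integer* roots `aᵢ` (the zero function,
given by the empty sum, is allowed). -/
def IsPowerSumE (α : ℕ → ℚ) : Prop :=
  ∃ (s : Finset ℚ) (c : ℚ → ℚ),
    (∀ a ∈ s, c a ≠ 0) ∧ (∀ a ∈ s, ∃ m : ℕ, 0 < m ∧ (m : ℚ) = a) ∧
    ∀ n : ℕ, α n = ∑ a ∈ s, c a * a ^ n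

/-- `HasEll α l` : `α` is a power sum in `E_ℚ` (nonzero rational coefficients,
distinct positive rational roots) and `l = ℓ(α)` is the maximal root in its
normalized representation; for `α = 0` (empty representation) this gives `l = 0`. -/
def HasEll (α : ℕ → ℚ) (l : ℚ) : Prop :=
  ∃ (s : Finset ℚ) (c : ℚ → ℚ),
    (∀ a ∈ s, c a ≠ 0) ∧ (∀ a ∈ s, 0 < a) ∧
    (∀ n : ℕ, α n = ∑ a ∈ s, c a * a ^ n) ∧
    l = WithBot.unbotD 0 s.max

/-- Value of the finite continued fraction `[u₀; u₁, …, u_R] = u₀ + 1/(u₁ + 1/(⋯ + 1/u_R))`. -/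
def cfEval : List ℚ → ℚ
  | [] => 0
  | [a] => a
  | a :: b :: l => a + (cfEval (b :: l))⁻¹

/-- All the "tails" `[uᵢ; …, u_R]` (for `i ≥ 1`) of the continued fraction
`[u₀; u₁, …, u_R]` have nonzero value, i.e. no division by zero occurs when
evaluating the continued fraction. -/
def CFTailsNonzero : List ℚ → Prop
  | [] => True
  | [_] => True
  | _ :: b :: l => cfEval (b :: l) ≠ 0 ∧ CFTailsNonzero (b :: l)

/-- `u` is the canonical continued fraction expansion of the rational `x`:
`x = [u₀; u₁, …, u_R]` with the `uᵢ` integers, `uᵢ ≥ 1` for `i ≥ 1`, and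
`u_R ≥ 2` if `R ≥ 1`. -/
def IsCanonCF (x : ℚ) (u : List ℤ) : Prop :=
  u ≠ [] ∧ (∀ a ∈ u.tail, 1 ≤ a) ∧ (2 ≤ u.length → 2 ≤ u.getLastD 0) ∧
    cfEval (u.map fun a => (a : ℚ)) = x

/-- The canonical continued fraction expansion of the rational `x` has `m`
partial quotients (so `x = [u₀; u₁, …, u_R]` with `m = R + 1`). -/
def HasCFLength (x : ℚ) (m : ℕ) : Prop :=
  ∃ u : List ℤ, IsCanonCF x u ∧ u.length = m
open Filter Topology in
lemma lim_core (s : Finset ℚ) (c : ℚ → ℚ) (x : ℚ) (hx : 0 < x)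
    (hpos : ∀ a ∈ s, 0 < a) (hle : ∀ a ∈ s, a ≤ x) :
    Tendsto (fun n : ℕ => (∑ a ∈ s, c a * a ^ n) / x ^ n) atTop
      (nhds (∑ a ∈ s, if a = x then c a else 0)) := by
  have h1 : ∀ n : ℕ, (∑ a ∈ s, c a * a ^ n) / x ^ n = ∑ a ∈ s, c a * (a / x) ^ n := by
    intro n
    rw [Finset.sum_div]
    refine Finset.sum_congr rfl fun a _ => ?_
    rw [div_pow, mul_div_assoc]
  simp only [h1]
  apply tendsto_finset_sum
  intro a ha
  by_cases hax : a = x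
  · subst hax
    simp only [if_pos rfl, div_self hx.ne', one_pow, mul_one]
    exact tendsto_const_nhds
  · simp only [if_neg hax]
    have hlt : a / x < 1 := (div_lt_one hx).mpr (lt_of_le_of_ne (hle a ha) hax)
    have hge : 0 ≤ a / x := div_nonneg (hpos a ha).le hx.le
    have := (tendsto_const_nhds (x := c a) (f := atTop (α := ℕ))).mul
      (tendsto_pow_atTop_nhds_zero_of_lt_one hge hlt)
    simpa using this

lemma hasEll_le_max {δ : ℕ → ℚ} {l : ℚ} (h : HasEll δ l) :
    ∃ (s : Finset ℚ) (c : ℚ → ℚ),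
      (∀ a ∈ s, c a ≠ 0) ∧ (∀ a ∈ s, 0 < a) ∧
      (∀ n : ℕ, δ n = ∑ a ∈ s, c a * a ^ n) ∧
      (∀ a ∈ s, a ≤ l) ∧ (s = ∅ → l = 0) ∧ (s.Nonempty → l ∈ s) := by
  obtain ⟨s, c, hc0, hpos, hrep, hmax⟩ := h
  refine ⟨s, c, hc0, hpos, hrep, ?_, ?_, ?_⟩
  · intro a ha
    rcases Finset.eq_empty_or_nonempty s with rfl | hs
    · simp at ha
    obtain ⟨b, hb⟩ := s.max_of_nonempty hs
    have : l = b := by rw [hmax, hb]; rfl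
    rw [this]
    exact Finset.le_max_of_eq ha hb
  · intro hs; subst hs; simpa using hmax
  · intro hs
    obtain ⟨b, hb⟩ := s.max_of_nonempty hs
    have : l = b := by rw [hmax, hb]; rfl
    rw [this]
    exact s.mem_of_max hb

lemma hasEll_nonneg {δ : ℕ → ℚ} {l : ℚ} (h : HasEll δ l) : 0 ≤ l := by
  obtain ⟨s, c, _, hpos, _, _, h0, hmem⟩ := hasEll_le_max h
  rcases Finset.eq_empty_or_nonempty s with rfl | hs
  · simp [h0 rfl]
  · exact (hpos l (hmem hs)).le

lemma hasEll_pos_of_ne {δ : ℕ → ℚ} {l : ℚ} (h : HasEll δ l) (h0 : δ ≠ 0) : 0 < l := by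
  obtain ⟨s, c, _, hpos, hrep, _, _, hmem⟩ := hasEll_le_max h
  rcases Finset.eq_empty_or_nonempty s with rfl | hs
  · exact absurd (funext fun n => by simpa using hrep n) h0
  · exact hpos l (hmem hs)

open Filter Topology in
lemma hasEll_lim {δ : ℕ → ℚ} {l : ℚ} (h : HasEll δ l) (hl : 0 < l) :
    ∃ c : ℚ, c ≠ 0 ∧ Tendsto (fun n : ℕ => δ n / l ^ n) atTop (nhds c) := by
  obtain ⟨s, c, hc0, hpos, hrep, hle, h0, hmem⟩ := hasEll_le_max h
  rcases Finset.eq_empty_or_nonempty s with rfl | hs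
  · rw [h0 rfl] at hl; exact absurd hl (lt_irrefl 0)
  have hls : l ∈ s := hmem hs
  refine ⟨c l, hc0 l hls, ?_⟩
  have hcore := lim_core s c l hl hpos hle
  have hsum : (∑ a ∈ s, if a = l then c a else 0) = c l := by
    rw [Finset.sum_ite_eq' s l c, if_pos hls]
  rw [hsum] at hcore
  refine hcore.congr fun n => ?_
  rw [← hrep n]

open Filter Topology in
lemma hasEll_lim_zero {δ : ℕ → ℚ} {l : ℚ} (h : HasEll δ l) {x : ℚ} (hx : l < x) :
    Tendsto (fun n : ℕ => δ n / x ^ n) atTop (nhds 0) := by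
  have hx0 : 0 < x := lt_of_le_of_lt (hasEll_nonneg h) hx
  obtain ⟨s, c, hc0, hpos, hrep, hle, _, _⟩ := hasEll_le_max h
  have hlex : ∀ a ∈ s, a ≤ x := fun a ha => le_of_lt (lt_of_le_of_lt (hle a ha) hx)
  have hcore := lim_core s c x hx0 hpos hlex
  have hsum : (∑ a ∈ s, if a = x then c a else 0) = 0 :=
    Finset.sum_eq_zero fun a ha => if_neg (ne_of_lt (lt_of_le_of_lt (hle a ha) hx))
  rw [hsum] at hcore
  refine hcore.congr fun n => ?_
  rw [← hrep n]

lemma hasEll_unique {δ : ℕ → ℚ} {l₁ l₂ : ℚ} (h₁ : HasEll δ l₁) (h₂ : HasEll δ l₂) :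
    l₁ = l₂ := by
  have key : ∀ {m₁ m₂ : ℚ}, HasEll δ m₁ → HasEll δ m₂ → m₁ < m₂ → False := by
    intro m₁ m₂ g₁ g₂ hlt
    have hm₂ : 0 < m₂ := lt_of_le_of_lt (hasEll_nonneg g₁) hlt
    obtain ⟨c, hc, htc⟩ := hasEll_lim g₂ hm₂
    have h0 := hasEll_lim_zero g₁ hlt
    exact hc (tendsto_nhds_unique htc h0)
  rcases lt_trichotomy l₁ l₂ with h | h | h
  · exact absurd h (fun h => key h₁ h₂ h)
  · exact h
  · exact absurd h (fun h => key h₂ h₁ h)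

open Filter Topology in
lemma tendsto_div_pow_zero_of_lt {f : ℕ → ℚ} {x y c : ℚ} (hx : 0 < x) (hxy : x < y)
    (h : Tendsto (fun n : ℕ => f n / x ^ n) atTop (nhds c)) :
    Tendsto (fun n : ℕ => f n / y ^ n) atTop (nhds 0) := by
  have hy : 0 < y := hx.trans hxy
  have hq : Tendsto (fun n : ℕ => (x / y) ^ n) atTop (nhds 0) :=
    tendsto_pow_atTop_nhds_zero_of_lt_one (div_nonneg hx.le hy.le) ((div_lt_one hy).mpr hxy)
  have := h.mul hq
  rw [mul_zero] at this
  refine this.congr fun n => ?_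
  rw [div_pow]
  field_simp

/-- If `α, β ∈ E` are nonzero, `ℓ(α) ≥ ℓ(β)` and `ℓ(β)` does not divide `ℓ(α)`
(as positive integers), then `ℓ(α - ζβ) ≥ ℓ(β)` for every `ζ ∈ E`. -/
theorem no_euclid_division_of_not_dvd
    (α β : ℕ → ℚ) (hα : IsPowerSumE α) (hβ : IsPowerSumE β)
    (hα0 : α ≠ 0) (hβ0 : β ≠ 0)
    (lα lβ : ℚ) (hlα : HasEll α lα) (hlβ : HasEll β lβ)
    (hge : lβ ≤ lα)
    (hndvd : ¬ ∃ m : ℕ, (m : ℚ) * lβ = lα) :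
    ∀ ζ : ℕ → ℚ, IsPowerSumE ζ →
      ∀ l : ℚ, HasEll (α - ζ * β) l → lβ ≤ l := by
  intro ζ hζ l hl
  by_contra hlt
  push_neg at hlt
  -- lβ and lα are positive
  have hlβpos : 0 < lβ := hasEll_pos_of_ne hlβ hβ0
  have hlαpos : 0 < lα := lt_of_lt_of_le hlβpos hge
  -- representation of ζ with integer roots
  obtain ⟨sζ, cζf, hcζ0, hint, hrepζ⟩ := hζ
  rcases Finset.eq_empty_or_nonempty sζ with rfl | hsζ
  · -- ζ = 0, so α - ζ * β = α
    have hzero : α - ζ * β = α := by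
      funext n
      have : ζ n = 0 := by simpa using hrepζ n
      simp [Pi.sub_apply, Pi.mul_apply, this]
    rw [hzero] at hl
    have := hasEll_unique hl hlα
    linarith
  · -- ζ ≠ 0 : let lζ be its maximal root, a positive natural number
    set lζ : ℚ := WithBot.unbotD 0 sζ.max with hlζdef
    have hposζ : ∀ a ∈ sζ, 0 < a := by
      intro a ha
      obtain ⟨m, hm, hma⟩ := hint a ha
      rw [← hma]
      exact_mod_cast hm
    have hEllζ : HasEll ζ lζ := ⟨sζ, cζf, hcζ0, hposζ, hrepζ, rfl⟩
    obtain ⟨b, hb⟩ := sζ.max_of_nonempty hsζ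
    have hlζb : lζ = b := by rw [hlζdef, hb]; rfl
    have hbs : b ∈ sζ := sζ.mem_of_max hb
    obtain ⟨mζ, hmζpos, hmζ⟩ := hint b hbs
    have hlζnat : (mζ : ℚ) = lζ := by rw [hlζb]; exact hmζ
    have hlζ1 : (1 : ℚ) ≤ lζ := by
      rw [← hlζnat]
      exact_mod_cast hmζpos
    have hlζpos : 0 < lζ := lt_of_lt_of_le one_pos hlζ1
    -- limits
    obtain ⟨cb, hcb0, hcb⟩ := hasEll_lim hlβ hlβpos
    obtain ⟨cz, hcz0, hcz⟩ := hasEll_lim hEllζ hlζpos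
    obtain ⟨ca, hca0, hca⟩ := hasEll_lim hlα hlαpos
    set X : ℚ := lζ * lβ with hXdef
    have hXpos : 0 < X := mul_pos hlζpos hlβpos
    have hlβX : lβ ≤ X := le_mul_of_one_le_left hlβpos.le hlζ1
    have hlX : l < X := lt_of_lt_of_le hlt hlβX
    have hg0 : Filter.Tendsto (fun n : ℕ => (α - ζ * β) n / X ^ n)
        Filter.atTop (nhds 0) := hasEll_lim_zero hl hlX
    have hprod : Filter.Tendsto (fun n : ℕ => (ζ n * β n) / X ^ n)
        Filter.atTop (nhds (cz * cb)) := by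
      have := hcz.mul hcb
      refine this.congr fun n => ?_
      rw [hXdef, mul_pow, div_mul_div_comm]
    have hA : Filter.Tendsto (fun n : ℕ => α n / X ^ n)
        Filter.atTop (nhds (cz * cb)) := by
      have := hprod.add hg0
      rw [add_zero] at this
      refine this.congr fun n => ?_
      simp only [Pi.sub_apply, Pi.mul_apply]
      rw [← add_div]
      ring_nf
    rcases lt_trichotomy X lα with hXlα | hXlα | hXlα
    · have h0 : Filter.Tendsto (fun n : ℕ => α n / lα ^ n) Filter.atTop (nhds 0) :=
        tendsto_div_pow_zero_of_lt hXpos hXlα hA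
      exact hca0 (tendsto_nhds_unique hca h0)
    · exact hndvd ⟨mζ, by rw [hlζnat, ← hXdef, hXlα]⟩
    · have h0 : Filter.Tendsto (fun n : ℕ => α n / X ^ n) Filter.atTop (nhds 0) :=
        tendsto_div_pow_zero_of_lt hlαpos hXlα hca
      exact (mul_ne_zero hcz0 hcb0) (tendsto_nhds_unique hA h0)
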